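/- Let (α, β) be a pair of real numbers for which there exist a constant C > 0 and a constant d ≥ 2 such that 1/(C b^d) ≤ |p + αq + βr| for all relatively prime integers p, q, r, where b = max(|p|, |q|, |r|). Then for every s > 0 and every positive integer N, Z_N(α, β, s) ≤ 2^N · C^s · 2^{N s d}. -/

import Mathlib

open Matrix Filter

noncomputable section

/-- The matrix `A₀` with rows (0,0,1), (1,0,−1), (0,1,0). -/
def A0 : Matrix (Fin 3) (Fin 3) ℝ := !![0,0,1; 1,0,-1; 0,1,0]

/-- The matrix `A₁` with rows (1,0,0), (0,1,0), (−1,0,1). -/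
def A1 : Matrix (Fin 3) (Fin 3) ℝ := !![1,0,0; 0,1,0; -1,0,1]

/-- `Amat 0 = A₀`, `Amat 1 = A₁`. -/
def Amat : Fin 2 → Matrix (Fin 3) (Fin 3) ℝ := ![A0, A1]

/-- The matrix `M` with rows (0,0,1), (0,0,α), (0,0,β). -/
def Mmat (α β : ℝ) : Matrix (Fin 3) (Fin 3) ℝ := !![0,0,1; 0,0,α; 0,0,β]

/-- Hilbert–Schmidt (Hadamard) product `A*B = Tr(A Bᵀ)`. -/
def HS (A B : Matrix (Fin 3) (Fin 3) ℝ) : ℝ := (A * Bᵀ).trace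

/-- `A^I = A_{σ₁} A_{σ₂} ⋯ A_{σ_N}` for a state `I = (σ₁,…,σ_N) ∈ {0,1}^N`. -/
def AI {N : ℕ} (I : Fin N → Fin 2) : Matrix (Fin 3) (Fin 3) ℝ :=
  (List.ofFn fun i => Amat (I i)).prod

/-- The partition function `Z_N(α, β, s) = Σ_{I ∈ 𝒮_N} 1/|M*A^I|^s`. -/
def Z (N : ℕ) (α β s : ℝ) : ℝ :=
  ∑ I : Fin N → Fin 2, 1 / |HS (Mmat α β) (AI I)| ^ s
private def A0z : Matrix (Fin 3) (Fin 3) ℤ := !![0,0,1; 1,0,-1; 0,1,0]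
def A1z : Matrix (Fin 3) (Fin 3) ℤ := !![1,0,0; 0,1,0; -1,0,1]
def Amatz : Fin 2 → Matrix (Fin 3) (Fin 3) ℤ := ![A0z, A1z]
def AIz {N : ℕ} (I : Fin N → Fin 2) : Matrix (Fin 3) (Fin 3) ℤ :=
  (List.ofFn fun i => Amatz (I i)).prod

lemma map_Amatz (σ : Fin 2) : (Amatz σ).map ((↑) : ℤ → ℝ) = Amat σ := by
  fin_cases σ <;>
  · ext i j
    fin_cases i <;> fin_cases j <;>
      simp [Amatz, Amat, A0z, A1z, A0, A1]

lemma AI_eq {N : ℕ} (I : Fin N → Fin 2) : AI I = (AIz I).map ((↑) : ℤ → ℝ) := by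
  have h : (AIz I).map ((↑) : ℤ → ℝ) = (Int.castRingHom ℝ).mapMatrix (AIz I) := rfl
  rw [h, AIz, map_list_prod, List.map_ofFn, AI]
  exact congrArg List.prod (congrArg List.ofFn (funext fun i => (map_Amatz (I i)).symm))

lemma HS_eq (α β : ℝ) (A : Matrix (Fin 3) (Fin 3) ℝ) :
    HS (Mmat α β) A = A 0 2 + α * A 1 2 + β * A 2 2 := by
  simp [HS, Mmat, Matrix.trace, Matrix.diag, Matrix.mul_apply, Fin.sum_univ_three]

lemma det_AIz {N : ℕ} (I : Fin N → Fin 2) : (AIz I).det = 1 := by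
  have h : (AIz I).det = Matrix.detMonoidHom (AIz I) := rfl
  rw [h, AIz, map_list_prod, List.map_ofFn]
  have h2 : ∀ σ : Fin 2, (Amatz σ).det = 1 := by
    intro σ
    fin_cases σ <;>
      simp [Amatz, A0z, A1z, Matrix.det_fin_three]
  have h3 : (Matrix.det ∘ fun i => Amatz (I i)) = fun _ : Fin N => (1 : ℤ) :=
    funext fun i => h2 (I i)
  simp only [Matrix.coe_detMonoidHom] at *
  rw [h3]
  simp

lemma rowsum (σ : Fin 2) (i : Fin 3) : ∑ k, |Amatz σ i k| ≤ 2 := by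
  fin_cases σ <;> fin_cases i <;>
    simp [Amatz, A0z, A1z, Fin.sum_univ_three]

lemma prod_entry_bound : ∀ (l : List (Matrix (Fin 3) (Fin 3) ℤ)),
    (∀ A ∈ l, ∀ i, ∑ k, |A i k| ≤ 2) → ∀ i j, |l.prod i j| ≤ 2 ^ l.length := by
  intro l
  induction l with
  | nil =>
    intro _ i j
    simp only [List.prod_nil, List.length_nil, pow_zero, Matrix.one_apply]
    split <;> simp
  | cons A t ih =>
    intro h i j
    have ht := ih (fun B hB => h B (List.mem_cons_of_mem _ hB))
    calc |(List.prod (A :: t)) i j| = |∑ k, A i k * t.prod k j| := by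
          rw [List.prod_cons, Matrix.mul_apply]
      _ ≤ ∑ k, |A i k * t.prod k j| := Finset.abs_sum_le_sum_abs _ _
      _ ≤ ∑ k, |A i k| * 2 ^ t.length := by
          apply Finset.sum_le_sum; intro k _
          rw [abs_mul]
          exact mul_le_mul_of_nonneg_left (ht k j) (abs_nonneg _)
      _ = (∑ k, |A i k|) * 2 ^ t.length := by rw [Finset.sum_mul]
      _ ≤ 2 * 2 ^ t.length := by
          apply mul_le_mul_of_nonneg_right (h A List.mem_cons_self i)
          positivity
      _ = 2 ^ (A :: t).length := by rw [List.length_cons]; ring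

lemma AIz_entry_bound {N : ℕ} (I : Fin N → Fin 2) (i j : Fin 3) :
    |(AIz I) i j| ≤ 2 ^ N := by
  have := prod_entry_bound (List.ofFn fun i => Amatz (I i))
    (by intro A hA i
        obtain ⟨k, rfl⟩ := List.mem_ofFn.mp hA
        exact rowsum _ _) i j
  simpa [AIz] using this

/-- If `1/(C bᵈ) ≤ |p + αq + βr|` for all relatively prime integers `p, q, r`
(with `b = max(|p|,|q|,|r|)`), then for every `s > 0` and every positive integer `N`,
`Z_N(α, β, s) ≤ 2^N · C^s · 2^{N s d}`. -/
theorem Z_le_bound (α β : ℝ) (C d : ℝ) (hC : 0 < C) (hd : 2 ≤ d)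
    (h : ∀ p q r : ℤ, Int.gcd p (Int.gcd q r) = 1 →
      1 / (C * (max |(p : ℝ)| (max |(q : ℝ)| |(r : ℝ)|)) ^ d) ≤
        |(p : ℝ) + α * (q : ℝ) + β * (r : ℝ)|) :
    ∀ s : ℝ, 0 < s → ∀ N : ℕ, 0 < N →
      Z N α β s ≤ 2 ^ N * C ^ s * (2 : ℝ) ^ ((N : ℝ) * s * d) := by
  intro s hs N hN
  rw [Z]

  have key : ∀ I : Fin N → Fin 2,
      1 / |HS (Mmat α β) (AI I)| ^ s ≤ C ^ s * (2 : ℝ) ^ ((N : ℝ) * s * d) := by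
    intro I
    set B := AIz I with hB
    set p := B 0 2 with hp
    set q := B 1 2 with hq
    set r := B 2 2 with hr
    -- Bezout relation from adjugate
    have hbez : B.adjugate 2 0 * p + B.adjugate 2 1 * q + B.adjugate 2 2 * r = 1 := by
      have := Matrix.adjugate_mul B
      have h22 := congrFun (congrFun this 2) 2
      rw [Matrix.mul_apply, Fin.sum_univ_three] at h22
      simpa [hB, det_AIz, Matrix.one_apply, hp, hq, hr] using h22
    have hg : Int.gcd p (Int.gcd q r) = 1 := by
      have hdvd : (↑(Int.gcd p ↑(Int.gcd q r)) : ℤ) ∣ 1 := by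
        rw [← hbez]
        have d1 : (↑(Int.gcd p ↑(Int.gcd q r)) : ℤ) ∣ p := Int.gcd_dvd_left _ _
        have d2 : (↑(Int.gcd p ↑(Int.gcd q r)) : ℤ) ∣ q :=
          dvd_trans (Int.gcd_dvd_right _ _) (Int.gcd_dvd_left _ _)
        have d3 : (↑(Int.gcd p ↑(Int.gcd q r)) : ℤ) ∣ r :=
          dvd_trans (Int.gcd_dvd_right _ _) (Int.gcd_dvd_right _ _)
        exact dvd_add (dvd_add (d1.mul_left _) (d2.mul_left _)) (d3.mul_left _)
      have : Int.gcd p ↑(Int.gcd q r) ∣ 1 := by exact_mod_cast hdvd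
      exact Nat.dvd_one.mp this
    set b : ℝ := max |(p : ℝ)| (max |(q : ℝ)| |(r : ℝ)|) with hb
    have hb1 : 1 ≤ b := by
      by_contra hcon
      push_neg at hcon
      have hp0 : p = 0 := by
        have : |(p : ℝ)| < 1 := lt_of_le_of_lt (le_max_left _ _) hcon
        have h2 : |p| < 1 := by exact_mod_cast this
        exact Int.abs_lt_one_iff.mp h2
      have hq0 : q = 0 := by
        have : |(q : ℝ)| < 1 := lt_of_le_of_lt ((le_max_left _ _).trans (le_max_right _ _)) hcon
        have h2 : |q| < 1 := by exact_mod_cast this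
        exact Int.abs_lt_one_iff.mp h2
      have hr0 : r = 0 := by
        have : |(r : ℝ)| < 1 := lt_of_le_of_lt ((le_max_right _ _).trans (le_max_right _ _)) hcon
        have h2 : |r| < 1 := by exact_mod_cast this
        exact Int.abs_lt_one_iff.mp h2
      rw [hp0, hq0, hr0] at hbez
      simp at hbez
    have hbN : b ≤ (2 : ℝ) ^ N := by
      have e : ∀ i : Fin 3, |((B i 2 : ℤ) : ℝ)| ≤ (2 : ℝ) ^ N := by
        intro i
        have := AIz_entry_bound I i 2
        calc |((B i 2 : ℤ) : ℝ)| = ((|B i 2| : ℤ) : ℝ) := by push_cast; ring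
          _ ≤ (((2:ℤ) ^ N : ℤ) : ℝ) := by exact_mod_cast this
          _ = (2 : ℝ) ^ N := by push_cast; ring
      exact max_le (e 0) (max_le (e 1) (e 2))
    have hHSeq : HS (Mmat α β) (AI I) = (p : ℝ) + α * q + β * r := by
      rw [HS_eq, AI_eq]
      simp [Matrix.map_apply, hp, hq, hr, hB]
    have hmain := h p q r hg
    rw [← hb, ← hHSeq] at hmain
    -- positivity facts
    have hbpos : (0 : ℝ) < b := lt_of_lt_of_le one_pos hb1
    have hbd_pos : (0 : ℝ) < b ^ d := Real.rpow_pos_of_pos hbpos d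
    have hden_pos : (0 : ℝ) < C * b ^ d := mul_pos hC hbd_pos
    have hHS_pos : (0 : ℝ) < |HS (Mmat α β) (AI I)| :=
      lt_of_lt_of_le (by positivity) hmain
    -- bound on b^d
    have hbd : b ^ d ≤ (2 : ℝ) ^ ((N : ℝ) * d) := by
      have h1 : b ^ d ≤ ((2 : ℝ) ^ N) ^ d :=
        Real.rpow_le_rpow (le_of_lt hbpos) hbN (by linarith)
      have h2 : ((2 : ℝ) ^ N) ^ d = (2 : ℝ) ^ ((N : ℝ) * d) := by
        rw [← Real.rpow_natCast 2 N, ← Real.rpow_mul (by norm_num)]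
      linarith [h1, h2.le, h2.ge]
    -- chain of inequalities
    have step1 : 1 / (C * (2 : ℝ) ^ ((N : ℝ) * d)) ≤ |HS (Mmat α β) (AI I)| := by
      refine le_trans ?_ hmain
      apply one_div_le_one_div_of_le hden_pos
      exact mul_le_mul_of_nonneg_left hbd (le_of_lt hC)
    have hq_pos : (0 : ℝ) < C * (2 : ℝ) ^ ((N : ℝ) * d) :=
      mul_pos hC (Real.rpow_pos_of_pos two_pos _)
    have step2 : (1 / (C * (2 : ℝ) ^ ((N : ℝ) * d))) ^ s ≤ |HS (Mmat α β) (AI I)| ^ s :=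
      Real.rpow_le_rpow (by positivity) step1 (le_of_lt hs)
    have step3 : 1 / |HS (Mmat α β) (AI I)| ^ s ≤ 1 / (1 / (C * (2 : ℝ) ^ ((N : ℝ) * d))) ^ s := by
      apply one_div_le_one_div_of_le
      · exact Real.rpow_pos_of_pos (by positivity) s
      · exact step2
    have step4 : (1 : ℝ) / (1 / (C * (2 : ℝ) ^ ((N : ℝ) * d))) ^ s
        = C ^ s * (2 : ℝ) ^ ((N : ℝ) * s * d) := by
      rw [one_div (C * _), Real.inv_rpow (le_of_lt hq_pos), one_div, inv_inv]
      rw [Real.mul_rpow (le_of_lt hC) (le_of_lt (Real.rpow_pos_of_pos two_pos _))]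
      rw [← Real.rpow_mul (by norm_num : (0:ℝ) ≤ 2)]
      rw [show (N : ℝ) * d * s = (N : ℝ) * s * d by ring]
    calc 1 / |HS (Mmat α β) (AI I)| ^ s
        ≤ 1 / (1 / (C * (2 : ℝ) ^ ((N : ℝ) * d))) ^ s := step3
      _ = C ^ s * (2 : ℝ) ^ ((N : ℝ) * s * d) := step4
  calc (∑ I : Fin N → Fin 2, 1 / |HS (Mmat α β) (AI I)| ^ s)
      ≤ ∑ _I : Fin N → Fin 2, C ^ s * (2 : ℝ) ^ ((N : ℝ) * s * d) :=
        Finset.sum_le_sum fun I _ => key I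
    _ = (Fintype.card (Fin N → Fin 2) : ℝ) * (C ^ s * (2 : ℝ) ^ ((N : ℝ) * s * d)) := by
        rw [Finset.sum_const, nsmul_eq_mul]; norm_num
    _ = 2 ^ N * C ^ s * (2 : ℝ) ^ ((N : ℝ) * s * d) := by
        simp [Fintype.card_fun]
        ring


end
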